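/- arXiv:1312.4395 — 2 statements merged into one kernel-verified Lean document; each statement's English description precedes it below -/
import Mathlib

section
/- Let f(z) = (1 + Σ_{i≥1} a_i z^i/i!)^n be the n-th power of an exponential formal power series over a ℚ-algebra, for a nonnegative integer n. Then the coefficient of z^i/i! in f equals Σ_{λ ⊢ i} (n)_{ℓ(λ)} d_λ a_λ, where (n)_k = n(n−1)···(n−k+1) is the falling factorial, and for λ = (1^{r_1}, 2^{r_2}, ...), d_λ = i!/((1!)^{r_1} r_1! (2!)^{r_2} r_2! ···), ℓ(λ) = r_1 + r_2 + ···, a_λ = a_1^{r_1} a_2^{r_2} ···. -/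
open Finset PowerSeries

private lemma aux_prod_smul {R : Type*} [CommRing R] [Algebra ℚ R] (s : Finset ℕ)
    (q : ℕ → ℚ) (x : ℕ → R) :
    ∏ j ∈ s, q j • x j = (∏ j ∈ s, q j) • ∏ j ∈ s, x j := by
  simp [Algebra.smul_def, Finset.prod_mul_distrib, map_prod]

private lemma aux_range_eq (i : ℕ) : Finset.range (i+1) = insert 0 (Finset.Icc 1 i) := by
  ext x; simp [Nat.lt_succ_iff]; omega

private lemma aux_not_mem (i : ℕ) : 0 ∉ Finset.Icc 1 i := by simp

/-- parts of candidate partition -/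
private def pparts (i : ℕ) (k : ℕ → ℕ) : Multiset ℕ :=
  ∑ j ∈ Finset.Icc 1 i, Multiset.replicate (k j) j

private lemma pparts_count (i : ℕ) (k : ℕ → ℕ) (x : ℕ) :
    (pparts i k).count x = if x ∈ Finset.Icc 1 i then k x else 0 := by
  rw [pparts, Multiset.count_sum']
  split_ifs with h
  · rw [Finset.sum_eq_single x]
    · simp [Multiset.count_replicate]
    · intro b _ hb; simp [Multiset.count_replicate, hb]
    · intro hx; exact absurd h hx
  · apply Finset.sum_eq_zero
    intro b hb
    rw [Multiset.count_replicate, if_neg]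
    rintro rfl; exact h hb

private lemma pparts_sum (i : ℕ) (k : ℕ → ℕ) :
    (pparts i k).sum = ∑ j ∈ Finset.Icc 1 i, j * k j := by
  rw [pparts, ← Multiset.coe_sumAddMonoidHom, map_sum]
  simp [Multiset.coe_sumAddMonoidHom, Multiset.sum_replicate, mul_comm]

private lemma pparts_pos (i : ℕ) (k : ℕ → ℕ) {x : ℕ} (hx : x ∈ pparts i k) : 0 < x := by
  have := Multiset.count_pos.mpr hx
  rw [pparts_count] at this
  split_ifs at this with h
  · exact lt_of_lt_of_le one_pos (Finset.mem_Icc.mp h).1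
  · exact absurd this (lt_irrefl 0)

private lemma pparts_mem_Icc {i : ℕ} {k : ℕ → ℕ} {x : ℕ} (hx : x ∈ pparts i k) :
    x ∈ Finset.Icc 1 i := by
  have := Multiset.count_pos.mpr hx
  rw [pparts_count] at this
  split_ifs at this with h
  · exact h
  · exact absurd this (lt_irrefl 0)

private lemma pparts_card (i : ℕ) (k : ℕ → ℕ) :
    Multiset.card (pparts i k) = ∑ j ∈ Finset.Icc 1 i, k j := by
  rw [← Multiset.sum_count_eq_card (s := Finset.Icc 1 i) (fun a ha => pparts_mem_Icc ha)]
  exact Finset.sum_congr rfl fun j hj => by rw [pparts_count, if_pos hj]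

private lemma parts_mem_Icc {i : ℕ} (P : Nat.Partition i) {x : ℕ} (hx : x ∈ P.parts) :
    x ∈ Finset.Icc 1 i := by
  rw [Finset.mem_Icc]
  constructor
  · exact P.parts_pos hx
  · calc x ≤ P.parts.sum := Multiset.single_le_sum (fun y _ => Nat.zero_le y) x hx
    _ = i := P.parts_sum

private lemma parts_count_card {i : ℕ} (P : Nat.Partition i) :
    ∑ j ∈ Finset.Icc 1 i, P.parts.count j = Multiset.card P.parts :=
  Multiset.sum_count_eq_card (fun a ha => parts_mem_Icc P ha)

private lemma parts_eq_pparts {i : ℕ} (P : Nat.Partition i) :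
    pparts i (fun j => P.parts.count j) = P.parts := by
  ext x
  rw [pparts_count]
  split_ifs with h
  · rfl
  · symm; rw [Multiset.count_eq_zero]
    intro hx; exact h (parts_mem_Icc P hx)

/-- For `f(z) = (1 + ∑_{i≥1} a_i z^i/i!)^n`, the coefficient of `z^i/i!` in `f`
equals `∑_{λ ⊢ i} (n)_{ℓ(λ)} d_λ a_λ`, with `(n)_k` the falling factorial. -/
theorem stmt_11 {R : Type*} [CommRing R] [Algebra ℚ R] (a : ℕ → R) (n : ℕ) :
    ∀ i : ℕ, 1 ≤ i →
      (i.factorial : ℚ) •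
          PowerSeries.coeff i
            ((PowerSeries.mk fun k =>
                if k = 0 then 1 else ((k.factorial : ℚ)⁻¹) • a k) ^ n)
        = ∑ P : Nat.Partition i,
            ((n.descFactorial (Multiset.card P.parts) : ℚ) *
                ((i.factorial : ℚ) /
                  ∏ j ∈ Finset.Icc 1 i,
                    ((j.factorial : ℚ) ^ P.parts.count j *
                      ((P.parts.count j).factorial : ℚ)))) •
              ∏ j ∈ Finset.Icc 1 i, a j ^ P.parts.count j := by
  intro i _
  set c : ℕ → R := fun k => if k = 0 then 1 else ((k.factorial : ℚ)⁻¹) • a k with hc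
  -- Step 1: truncate
  have step1 : PowerSeries.coeff i ((PowerSeries.mk c) ^ n)
      = PowerSeries.coeff i
        ((∑ j ∈ Finset.range (i+1), PowerSeries.monomial j (c j)) ^ n) := by
    have hdvd : (PowerSeries.X : R⟦X⟧)^(i+1) ∣
        (PowerSeries.mk c)^n - (∑ j ∈ range (i+1), PowerSeries.monomial j (c j))^n := by
      refine dvd_trans ?_ (sub_dvd_pow_sub_pow _ _ n)
      rw [PowerSeries.X_pow_dvd_iff]
      intro m hm
      rw [map_sub, PowerSeries.coeff_mk, map_sum, Finset.sum_eq_single m]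
      · simp
      · intro b _ hb; simp [PowerSeries.coeff_monomial, hb.symm]
      · intro h; exact absurd (Finset.mem_range.mpr hm) h
    have h2 := PowerSeries.X_pow_dvd_iff.mp hdvd i (Nat.lt_succ_self i)
    rw [map_sub, sub_eq_zero] at h2
    exact h2
  -- Step 2: multinomial expansion
  have step2 : PowerSeries.coeff i
        ((∑ j ∈ Finset.range (i+1), PowerSeries.monomial j (c j)) ^ n)
      = ∑ k ∈ (Finset.piAntidiag (range (i+1)) n).filter
          (fun k => ∑ j ∈ range (i+1), j * k j = i),
          (Nat.multinomial (range (i+1)) k : R) * ∏ j ∈ range (i+1), c j ^ k j := by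
    have hmon : ∀ (j : ℕ) (r : R), PowerSeries.monomial j r = PowerSeries.C r * X ^ j := by
      intro j r; ext m; simp [coeff_monomial, coeff_C_mul, coeff_X_pow]
    rw [Finset.sum_pow_eq_sum_piAntidiag, map_sum, Finset.sum_filter]
    refine Finset.sum_congr rfl fun k hk => ?_
    have key : ∏ j ∈ range (i+1), (PowerSeries.monomial j (c j)) ^ k j
        = PowerSeries.C (∏ j ∈ range (i+1), c j ^ k j)
            * X ^ (∑ j ∈ range (i+1), j * k j) := by
      simp_rw [hmon, mul_pow, ← map_pow, ← pow_mul, Finset.prod_mul_distrib, ← map_prod,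
        Finset.prod_pow_eq_pow_sum]
    rw [key, ← mul_assoc, ← map_natCast (PowerSeries.C (R := R)) (Nat.multinomial (range (i+1)) k),
      ← map_mul, coeff_C_mul, coeff_X_pow]
    split_ifs with h1 h2 h3
    · exact mul_one _
    · exact absurd h1.symm h2
    · exact absurd h3.symm h1
    · exact mul_zero _
  rw [step1, step2, Finset.smul_sum]
  -- Step 3: restrict RHS to partitions with few parts
  rw [show (Finset.univ : Finset (Nat.Partition i))
      = Finset.univ from rfl]
  rw [← Finset.sum_filter_of_ne
    (p := fun P : Nat.Partition i => Multiset.card P.parts ≤ n)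
    (s := Finset.univ)
    (f := fun P => ((n.descFactorial (Multiset.card P.parts) : ℚ) *
                ((i.factorial : ℚ) /
                  ∏ j ∈ Finset.Icc 1 i,
                    ((j.factorial : ℚ) ^ P.parts.count j *
                      ((P.parts.count j).factorial : ℚ)))) •
              ∏ j ∈ Finset.Icc 1 i, a j ^ P.parts.count j)
    (by
      intro P _ hne
      by_contra h
      exact hne (by simp [Nat.descFactorial_eq_zero_iff_lt.mpr (lt_of_not_ge h)]))]
  -- Step 4: the bijection
  refine Finset.sum_bij'
    (i := fun k hk => (⟨pparts i k, fun hx => pparts_pos i k hx, ?_⟩ : Nat.Partition i))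
    (j := fun P hP => fun j => if j = 0 then n - Multiset.card P.parts else P.parts.count j)
    ?_ ?_ ?_ ?_ ?_
  · -- parts_sum
    rw [Finset.mem_filter, Finset.mem_piAntidiag] at hk
    rw [pparts_sum]
    rw [aux_range_eq, Finset.sum_insert (aux_not_mem i)] at hk
    simpa using hk.2
  · -- i maps into target
    intro k hk
    rw [Finset.mem_filter, Finset.mem_piAntidiag] at hk
    rw [Finset.mem_filter]
    refine ⟨Finset.mem_univ _, ?_⟩
    show Multiset.card (pparts i k) ≤ n
    rw [pparts_card]
    rw [aux_range_eq, Finset.sum_insert (aux_not_mem i)] at hk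
    omega
  · -- j maps into source
    intro P hP
    rw [Finset.mem_filter] at hP
    have hcard := hP.2
    rw [Finset.mem_filter, Finset.mem_piAntidiag]
    have hsum0 : ∑ j ∈ Finset.Icc 1 i, j * P.parts.count j = i := by
      have := pparts_sum i (fun j => P.parts.count j)
      rw [parts_eq_pparts, P.parts_sum] at this
      exact this.symm
    refine ⟨⟨?_, ?_⟩, ?_⟩
    · rw [aux_range_eq, Finset.sum_insert (aux_not_mem i)]
      have : ∑ j ∈ Finset.Icc 1 i,
          (if j = 0 then n - Multiset.card P.parts else P.parts.count j)
          = ∑ j ∈ Finset.Icc 1 i, P.parts.count j := by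
        refine Finset.sum_congr rfl fun j hj => ?_
        rw [if_neg]
        have := (Finset.mem_Icc.mp hj).1; omega
      rw [this, parts_count_card, if_pos rfl]
      omega
    · intro j hj
      by_cases h0 : j = 0
      · subst h0; simp
      · rw [if_neg h0] at hj
        have : j ∈ P.parts := Multiset.count_pos.mp (Nat.pos_of_ne_zero hj)
        have := parts_mem_Icc P this
        rw [aux_range_eq]
        exact Finset.mem_insert_of_mem this
    · rw [aux_range_eq, Finset.sum_insert (aux_not_mem i)]
      simp only [zero_mul, zero_add]
      have heq : ∑ j ∈ Finset.Icc 1 i,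
          j * (if j = 0 then n - Multiset.card P.parts else P.parts.count j)
          = ∑ j ∈ Finset.Icc 1 i, j * P.parts.count j := by
        refine Finset.sum_congr rfl fun j hj => ?_
        rw [if_neg]
        have := (Finset.mem_Icc.mp hj).1; omega
      rw [heq, hsum0]
  · -- left inverse
    intro k hk
    rw [Finset.mem_filter, Finset.mem_piAntidiag] at hk
    funext j
    show (if j = 0 then n - Multiset.card (pparts i k) else Multiset.count j (pparts i k)) = k j
    by_cases h0 : j = 0
    · subst h0
      rw [if_pos rfl]
      have hcard : Multiset.card (pparts i k) = ∑ j ∈ Finset.Icc 1 i, k j := pparts_card i k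
      rw [aux_range_eq, Finset.sum_insert (aux_not_mem i)] at hk
      omega
    · rw [if_neg h0, pparts_count]
      split_ifs with h
      · rfl
      · symm
        by_contra hne
        have := hk.1.2 j hne
        rw [aux_range_eq, Finset.mem_insert] at this
        rcases this with h1 | h1
        · exact h0 h1
        · exact h h1
  · -- right inverse
    intro P hP
    ext1
    show pparts i _ = P.parts
    rw [← parts_eq_pparts P]
    unfold pparts
    refine Finset.sum_congr rfl fun j hj => ?_
    have h0 : j ≠ 0 := by have := (Finset.mem_Icc.mp hj).1; omega
    dsimp only
    rw [if_neg h0]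
    change Multiset.replicate (Multiset.count j (pparts i fun j => Multiset.count j P.parts)) j = _
    rw [parts_eq_pparts]
  · -- terms match
    intro k hk
    rw [Finset.mem_filter, Finset.mem_piAntidiag] at hk
    obtain ⟨⟨hsn, hsupp⟩, hsi⟩ := hk
    have hcount : ∀ j ∈ Finset.Icc 1 i, Multiset.count j (pparts i k) = k j :=
      fun j hj => by rw [pparts_count, if_pos hj]
    dsimp only
    have hA : ∏ j ∈ Finset.Icc 1 i, a j ^ Multiset.count j (pparts i k)
        = ∏ j ∈ Finset.Icc 1 i, a j ^ k j :=
      Finset.prod_congr rfl fun j hj => by rw [hcount j hj]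
    have hB : ∏ j ∈ Finset.Icc 1 i,
          ((j.factorial : ℚ) ^ Multiset.count j (pparts i k) *
            ((Multiset.count j (pparts i k)).factorial : ℚ))
        = ∏ j ∈ Finset.Icc 1 i, ((j.factorial : ℚ) ^ k j * ((k j).factorial : ℚ)) :=
      Finset.prod_congr rfl fun j hj => by rw [hcount j hj]
    rw [pparts_card i k, hA, hB]
    -- rewrite the product of coefficients
    have hL : ∏ j ∈ range (i+1), c j ^ k j
        = (∏ j ∈ Finset.Icc 1 i, ((j.factorial : ℚ)⁻¹) ^ k j) •
            ∏ j ∈ Finset.Icc 1 i, a j ^ k j := by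
      rw [aux_range_eq, Finset.prod_insert (aux_not_mem i)]
      have h0 : c 0 = 1 := by simp [hc]
      rw [h0, one_pow, one_mul, ← aux_prod_smul]
      refine Finset.prod_congr rfl fun j hj => ?_
      have hj0 : j ≠ 0 := by have := (Finset.mem_Icc.mp hj).1; omega
      simp [hc, hj0, smul_pow]
    rw [hL]
    set M := Nat.multinomial (range (i+1)) k with hM
    set ℓ := ∑ j ∈ Finset.Icc 1 i, k j with hℓ
    set A := ∏ j ∈ Finset.Icc 1 i, a j ^ k j with hA'
    set Q := ∏ j ∈ Finset.Icc 1 i, ((j.factorial : ℚ)⁻¹) ^ k j with hQ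
    have hmulA : (M : R) * (Q • A) = ((M : ℚ) * Q) • A := by
      rw [mul_smul_comm, ← map_natCast (algebraMap ℚ R) M, ← Algebra.smul_def,
        smul_smul, mul_comm]
    rw [hmulA, smul_smul]
    congr 1
    -- now a pure ℚ identity
    have hsum' : k 0 + ℓ = n := by
      rw [aux_range_eq, Finset.sum_insert (aux_not_mem i)] at hsn
      exact hsn
    have hspec := Nat.multinomial_spec (range (i+1)) k
    rw [aux_range_eq, Finset.prod_insert (aux_not_mem i),
      Finset.sum_insert (aux_not_mem i)] at hspec
    have hD : ((k 0).factorial) * n.descFactorial ℓ = n.factorial := by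
      have hle : ℓ ≤ n := by omega
      have := Nat.factorial_mul_descFactorial hle
      rw [show n - ℓ = k 0 by omega] at this
      exact this
    have key : (∏ j ∈ Finset.Icc 1 i, (k j).factorial) * M = n.descFactorial ℓ := by
      refine Nat.eq_of_mul_eq_mul_left (Nat.factorial_pos (k 0)) ?_
      rw [← mul_assoc, show M = Nat.multinomial (insert 0 (Finset.Icc 1 i)) k by
        rw [hM, aux_range_eq], hspec, ← hℓ, hsum']
      exact hD.symm
    -- cast to ℚ
    have keyQ : (∏ j ∈ Finset.Icc 1 i, ((k j).factorial : ℚ)) * (M : ℚ)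
        = (n.descFactorial ℓ : ℚ) := by
      rw [← Nat.cast_prod, ← Nat.cast_mul, key]
    have hQeq : Q = (∏ j ∈ Finset.Icc 1 i, ((j.factorial : ℚ)) ^ k j)⁻¹ := by
      rw [hQ, ← Finset.prod_inv_distrib]
      exact Finset.prod_congr rfl fun j _ => by rw [inv_pow]
    have hprodsplit : ∏ j ∈ Finset.Icc 1 i, ((j.factorial : ℚ) ^ k j * ((k j).factorial : ℚ))
        = (∏ j ∈ Finset.Icc 1 i, ((j.factorial : ℚ)) ^ k j)
            * ∏ j ∈ Finset.Icc 1 i, ((k j).factorial : ℚ) :=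
      Finset.prod_mul_distrib
    have h1ne : (∏ j ∈ Finset.Icc 1 i, ((j.factorial : ℚ)) ^ k j) ≠ 0 := by
      positivity
    have h2ne : (∏ j ∈ Finset.Icc 1 i, ((k j).factorial : ℚ)) ≠ 0 := by
      positivity
    rw [hQeq, hprodsplit, ← keyQ]
    field_simp
end

section
/- Let Σ, M be p × p complex matrices with Σ Hermitian positive definite, let Ω = Σ^{-1} M, and let f(z) = exp(−Tr[(I − zΣ)^{-1} Σ Ω z]) · det(I − zΣ)^{-n} as a formal power series in z (the moment generating function of Tr W(n) for the non-central Wishart distribution W_p(n, Σ, M)). Then the i-th formal cumulant of f equals n (i−1)! Tr(Σ^i) − i! Tr(M Σ^{i−1}) for every i ≥ 1. -/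
open PowerSeries
open scoped ComplexOrder

/-- Formal exponential of a power series with zero constant term. -/
noncomputable def expComp {R : Type*} [CommRing R] [Algebra ℚ R]
    (f : PowerSeries R) : PowerSeries R :=
  PowerSeries.mk fun n =>
    ∑ k ∈ Finset.range (n + 1), ((k.factorial : ℚ)⁻¹) • PowerSeries.coeff (R := R) n (f ^ k)

namespace WAux

open Finset

noncomputable def pexp (N : ℕ) (f : PowerSeries ℂ) : PowerSeries ℂ :=
  ∑ k ∈ range (N + 1), ((k.factorial : ℂ)⁻¹) • f ^ k

lemma coeff_pow_eq_zero {f : PowerSeries ℂ} (hf : constantCoeff f = 0) {n k : ℕ}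
    (h : n < k) : coeff n (f ^ k) = 0 := by
  have hX : (X : PowerSeries ℂ) ∣ f := X_dvd_iff.mpr hf
  have h2 : (X : PowerSeries ℂ) ^ k ∣ f ^ k := pow_dvd_pow_of_dvd hX k
  exact (X_pow_dvd_iff.mp h2) n h

lemma coeff_expComp {f : PowerSeries ℂ} (n : ℕ) :
    coeff n (expComp f) = ∑ k ∈ range (n + 1), ((k.factorial : ℂ)⁻¹) * coeff n (f ^ k) := by
  rw [expComp, coeff_mk]
  refine Finset.sum_congr rfl fun k _ => ?_
  rw [Algebra.smul_def, eq_ratCast]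
  push_cast
  ring

lemma coeff_expComp_pexp {f : PowerSeries ℂ} (hf : constantCoeff f = 0) {n N : ℕ}
    (hN : n ≤ N) : coeff n (expComp f) = coeff n (pexp N f) := by
  rw [coeff_expComp, pexp, map_sum]
  simp only [coeff_smul, smul_eq_mul]
  refine Finset.sum_subset (by intro k hk; simp at hk ⊢; omega) ?_
  intro k hk hk2
  simp only [mem_range, not_lt] at hk2
  rw [coeff_pow_eq_zero hf (by omega), mul_zero]

lemma constantCoeff_expComp {f : PowerSeries ℂ} (hf : constantCoeff f = 0) :
    constantCoeff (expComp f) = 1 := by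
  rw [← coeff_zero_eq_constantCoeff, coeff_expComp]
  simp

lemma derivative_pexp (N : ℕ) (f : PowerSeries ℂ) :
    d⁄dX ℂ (pexp (N + 1) f) = d⁄dX ℂ f * pexp N f := by
  rw [pexp, pexp, map_sum, Finset.sum_range_succ', Finset.mul_sum]
  have h0 : d⁄dX ℂ (((Nat.factorial 0 : ℂ)⁻¹) • f ^ 0) = 0 := by simp
  rw [h0, add_zero]
  refine Finset.sum_congr rfl fun k _ => ?_
  rw [Derivation.map_smul, Derivation.leibniz_pow]
  have hc : ((k + 1).factorial : ℂ)⁻¹ * ((k : ℂ) + 1) = (k.factorial : ℂ)⁻¹ := by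
    rw [Nat.factorial_succ]
    push_cast
    rw [mul_inv, mul_comm ((k:ℂ)+1)⁻¹, mul_assoc,
      inv_mul_cancel₀ (Nat.cast_add_one_ne_zero k)]
    ring
  rw [Nat.add_sub_cancel, smul_eq_mul, nsmul_eq_mul,
    PowerSeries.smul_eq_C_mul, PowerSeries.smul_eq_C_mul, ← hc, map_mul,
    ← map_natCast ((C (R := ℂ))) (k + 1), Nat.cast_add_one]
  ring

lemma coeff_mul_congr {u v : PowerSeries ℂ} (w : PowerSeries ℂ) (n : ℕ)
    (hb : ∀ b ≤ n, coeff b u = coeff b v) :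
    coeff n (w * u) = coeff n (w * v) := by
  rw [coeff_mul, coeff_mul]
  exact Finset.sum_congr rfl fun x hx => by
    rw [hb x.2 (Finset.HasAntidiagonal.antidiagonal.snd_le hx)]

lemma derivative_expComp {f : PowerSeries ℂ} (hf : constantCoeff f = 0) :
    d⁄dX ℂ (expComp f) = d⁄dX ℂ f * expComp f := by
  ext n
  have h1 : coeff n (d⁄dX ℂ (expComp f)) = coeff n (d⁄dX ℂ (pexp (n + 1) f)) := by
    rw [coeff_derivative, coeff_derivative,
      coeff_expComp_pexp hf (N := n + 1) le_rfl]
  rw [h1, derivative_pexp]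
  exact coeff_mul_congr _ n fun b hb => (coeff_expComp_pexp hf (N := n) hb).symm

lemma ode_unique {h u v : PowerSeries ℂ} (hu : d⁄dX ℂ u = h * u) (hv : d⁄dX ℂ v = h * v)
    (hc : constantCoeff u = constantCoeff v) : u = v := by
  ext n
  induction n using Nat.strong_induction_on with
  | _ n ih =>
    match n with
    | 0 => simpa using hc
    | Nat.succ m =>
      have h1 : coeff m (d⁄dX ℂ u) = coeff m (d⁄dX ℂ v) := by
        rw [hu, hv]
        exact coeff_mul_congr _ m fun b hb => ih b (by omega)
      rw [coeff_derivative, coeff_derivative] at h1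
      exact mul_right_cancel₀ (Nat.cast_add_one_ne_zero m) h1

lemma expComp_add {f g : PowerSeries ℂ} (hf : constantCoeff f = 0)
    (hg : constantCoeff g = 0) : expComp (f + g) = expComp f * expComp g := by
  have hfg : constantCoeff (f + g) = 0 := by rw [map_add, hf, hg, add_zero]
  refine ode_unique (h := d⁄dX ℂ f + d⁄dX ℂ g) ?_ ?_ ?_
  · rw [derivative_expComp hfg, map_add]
  · rw [Derivation.leibniz, smul_eq_mul, smul_eq_mul,
      derivative_expComp hf, derivative_expComp hg]
    ring
  · rw [constantCoeff_expComp hfg, map_mul, constantCoeff_expComp hf,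
      constantCoeff_expComp hg, one_mul]

lemma expComp_zero : expComp (0 : PowerSeries ℂ) = 1 := by
  ext n
  rw [expComp, coeff_mk]
  cases n with
  | zero => simp
  | succ m =>
    rw [coeff_one, if_neg (Nat.succ_ne_zero m), Finset.sum_eq_zero]
    intro k hk
    cases k with
    | zero => simp
    | succ l => simp [zero_pow]

lemma constantCoeff_smul (a : ℂ) {f : PowerSeries ℂ} (hf : constantCoeff f = 0) :
    constantCoeff (a • f) = 0 := by
  rw [PowerSeries.smul_eq_C_mul, map_mul, hf, mul_zero]

lemma expComp_sum {ι : Type*} (s : Finset ι) (F : ι → PowerSeries ℂ)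
    (hF : ∀ j ∈ s, constantCoeff (F j) = 0) :
    expComp (∑ j ∈ s, F j) = ∏ j ∈ s, expComp (F j) := by
  classical
  induction s using Finset.induction_on with
  | empty => simpa using expComp_zero
  | @insert j s hj ih =>
    rw [Finset.sum_insert hj, Finset.prod_insert hj,
      expComp_add (hF j (Finset.mem_insert_self j s))
        (by rw [map_sum]; exact Finset.sum_eq_zero fun i hi => hF i (Finset.mem_insert_of_mem hi)),
      ih fun i hi => hF i (Finset.mem_insert_of_mem hi)]

lemma expComp_pow {f : PowerSeries ℂ} (hf : constantCoeff f = 0) (k : ℕ) :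
    (expComp f) ^ k = expComp ((k : ℂ) • f) := by
  induction k with
  | zero => rw [pow_zero, Nat.cast_zero, zero_smul, expComp_zero]
  | succ m ih =>
    have : ((m + 1 : ℕ) : ℂ) • f = (m : ℂ) • f + f := by push_cast; rw [add_smul, one_smul]
    rw [this, expComp_add (constantCoeff_smul _ hf) hf, ← ih, pow_succ]

noncomputable def ell (a : ℂ) : PowerSeries ℂ :=
  PowerSeries.mk fun i => if i = 0 then 0 else a ^ i * (i : ℂ)⁻¹

lemma constantCoeff_ell (a : ℂ) : constantCoeff (ell a) = 0 := by
  rw [← coeff_zero_eq_constantCoeff, ell, coeff_mk]; simp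

lemma derivative_ell (a : ℂ) : d⁄dX ℂ (ell a) = (C (R := ℂ)) a * PowerSeries.mk (fun n => a ^ n) := by
  ext n
  rw [coeff_derivative, ell, coeff_mk, coeff_C_mul, coeff_mk]
  simp only [Nat.succ_ne_zero, if_false]
  rw [mul_assoc]
  push_cast
  rw [inv_mul_cancel₀ (Nat.cast_add_one_ne_zero n), mul_one, pow_succ, mul_comm]

lemma geom_mul (a : ℂ) : PowerSeries.mk (fun n => a ^ n) * (1 - (C (R := ℂ)) a * X) = 1 := by
  ext n
  rw [mul_sub, mul_one, map_sub]
  cases n with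
  | zero => simp
  | succ m =>
    rw [← mul_assoc, mul_comm (PowerSeries.mk fun n => a ^ n) ((C (R := ℂ)) a), mul_assoc, coeff_C_mul,
      coeff_succ_mul_X, coeff_mk, coeff_mk]
    simp [pow_succ, mul_comm]

lemma expComp_ell_mul (a : ℂ) : expComp (ell a) * (1 - (C (R := ℂ)) a * X) = 1 := by
  refine ode_unique (h := 0) ?_ ?_ ?_
  · rw [Derivation.leibniz, smul_eq_mul, smul_eq_mul, derivative_expComp (constantCoeff_ell a),
      derivative_ell]
    have hd : d⁄dX ℂ (1 - (C (R := ℂ)) a * X) = -((C (R := ℂ)) a) := by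
      rw [map_sub]
      simp [Derivation.leibniz]
    rw [hd]
    linear_combination ((C (R := ℂ)) a * expComp (ell a)) * geom_mul a
  · rw [Derivation.map_one_eq_zero, zero_mul]
  · rw [map_mul, constantCoeff_expComp (constantCoeff_ell a), one_mul]
    simp

noncomputable def G {p : ℕ} (S : Matrix (Fin p) (Fin p) ℂ) :
    Matrix (Fin p) (Fin p) (PowerSeries ℂ) :=
  Matrix.of fun i j => PowerSeries.mk fun k => (S ^ k) i j

lemma mul_G {p : ℕ} (S : Matrix (Fin p) (Fin p) ℂ) :
    (1 - (X : PowerSeries ℂ) • S.map ((C (R := ℂ)))) * G S = 1 := by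
  ext i j n
  have e1 : ((1 - (X : PowerSeries ℂ) • S.map ((C (R := ℂ)))) * G S) i j
      = PowerSeries.mk (fun k => (S ^ k) i j)
        - X * ∑ l, (C (R := ℂ)) (S i l) * PowerSeries.mk (fun k => (S ^ k) l j) := by
    simp [G, Matrix.sub_apply, Matrix.smul_apply, Matrix.mul_apply, Matrix.map_apply,
      Matrix.one_apply, smul_eq_mul, sub_mul, ite_mul, one_mul, zero_mul,
      Finset.sum_sub_distrib, Finset.mul_sum, mul_assoc]
  rw [e1, map_sub]
  cases n with
  | zero =>
    rw [mul_comm, coeff_zero_mul_X, coeff_mk]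
    simp [Matrix.one_apply, PowerSeries.coeff_one]
  | succ m =>
    rw [mul_comm, coeff_succ_mul_X, coeff_mk, map_sum]
    have e2 : ∑ l, coeff m ((C (R := ℂ)) (S i l) * PowerSeries.mk (fun k => (S ^ k) l j))
        = (S ^ (m + 1)) i j := by
      rw [pow_succ', Matrix.mul_apply]
      exact Finset.sum_congr rfl fun l _ => by rw [coeff_C_mul, coeff_mk]
    rw [e2, sub_self]
    have h1 : ((1 : Matrix (Fin p) (Fin p) (PowerSeries ℂ)) i j)
        = (C (R := ℂ)) ((1 : Matrix (Fin p) (Fin p) ℂ) i j) := by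
      simp [Matrix.one_apply, apply_ite ((C (R := ℂ)))]
    rw [h1, coeff_C]
    simp

lemma trace_G_mul {p : ℕ} (S M : Matrix (Fin p) (Fin p) ℂ) :
    Matrix.trace (G S * M.map ((C (R := ℂ))) * ((X : PowerSeries ℂ) • 1))
      = PowerSeries.mk fun i => if i = 0 then 0 else Matrix.trace (M * S ^ (i - 1)) := by
  rw [Matrix.mul_smul, mul_one, Matrix.trace_smul, smul_eq_mul]
  have e1 : Matrix.trace (G S * M.map ((C (R := ℂ))))
      = PowerSeries.mk fun k => Matrix.trace (S ^ k * M) := by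
    ext n
    rw [Matrix.trace, map_sum, coeff_mk, Matrix.trace]
    refine Finset.sum_congr rfl fun i _ => ?_
    rw [Matrix.diag_apply, Matrix.mul_apply, map_sum, Matrix.diag_apply, Matrix.mul_apply]
    refine Finset.sum_congr rfl fun l _ => ?_
    simp [G, Matrix.map_apply, mul_comm, coeff_C_mul]
  rw [e1]
  ext n
  cases n with
  | zero => simp
  | succ m =>
    rw [coeff_succ_X_mul, coeff_mk, coeff_mk, if_neg (Nat.succ_ne_zero m), Nat.succ_sub_one,
      Matrix.trace_mul_comm]

end WAux

open WAux Finset in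
/-- The `i`-th formal cumulant of the moment generating function
`f(z) = exp(−Tr[(I − zΣ)⁻¹ Σ Ω z]) · det(I − zΣ)^{−n}` of the trace of the
non-central Wishart distribution `W_p(n, Σ, M)`, with `Ω = Σ⁻¹ M`, equals
`n (i−1)! Tr(Σ^i) − i! Tr(M Σ^{i−1})`; equivalently the coefficient of `z^i`
in `log f` is `n Tr(Σ^i)/i − Tr(M Σ^{i−1})`. -/
theorem stmt_18 (p n : ℕ) (hp : 0 < p) (hn : 0 < n)
    (S M : Matrix (Fin p) (Fin p) ℂ) (hS : S.PosDef) :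
    expComp (-Matrix.trace
          ((1 - (X : PowerSeries ℂ) • S.map (C (R := ℂ)))⁻¹ * S.map (C (R := ℂ)) *
            (S⁻¹ * M).map (C (R := ℂ)) * ((X : PowerSeries ℂ) • 1))) *
        ((Matrix.det (1 - (X : PowerSeries ℂ) • S.map (C (R := ℂ))))⁻¹) ^ n
      = expComp (PowerSeries.mk fun i =>
          if i = 0 then 0
          else (n : ℂ) * (i : ℂ)⁻¹ * Matrix.trace (S ^ i) -
            Matrix.trace (M * S ^ (i - 1))) := by
  classical
  -- eigen-decomposition data
  set d : Fin p → ℂ := fun j => ((hS.1.eigenvalues j : ℝ) : ℂ) with hd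
  set U : Matrix (Fin p) (Fin p) ℂ :=
    (Matrix.IsHermitian.eigenvectorUnitary hS.1 : Matrix (Fin p) (Fin p) ℂ) with hU
  have hUW : U * star U = 1 :=
    (Matrix.mem_unitaryGroup_iff).mp (Matrix.IsHermitian.eigenvectorUnitary hS.1).2
  have hWU : star U * U = 1 :=
    (Matrix.mem_unitaryGroup_iff').mp (Matrix.IsHermitian.eigenvectorUnitary hS.1).2
  have hspec : S = U * Matrix.diagonal d * star U := by
    have := hS.1.spectral_theorem
    rw [Unitary.conjStarAlgAut_apply] at this
    exact this
  have hpow : ∀ i : ℕ, S ^ i = U * (Matrix.diagonal d) ^ i * star U := by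
    intro i
    induction i with
    | zero => rw [pow_zero, pow_zero, mul_one, hUW]
    | succ m ih =>
      rw [pow_succ, ih, hspec, pow_succ]
      simp only [Matrix.mul_assoc]
      rw [← Matrix.mul_assoc (star U) U, hWU, Matrix.one_mul]
  -- determinant factorization
  have hdet : Matrix.det (1 - (X : PowerSeries ℂ) • S.map ((C (R := ℂ))))
      = ∏ j, (1 - (C (R := ℂ)) (d j) * X) := by
    have hmap1 : (1 : Matrix (Fin p) (Fin p) ℂ⟦X⟧) = U.map ((C (R := ℂ))) * (star U).map ((C (R := ℂ))) := by
      rw [← Matrix.map_mul, hUW, Matrix.map_one _ (map_zero _) (map_one _)]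
    have e1 : 1 - (X : ℂ⟦X⟧) • S.map ((C (R := ℂ)))
        = U.map ((C (R := ℂ))) * (1 - (X : ℂ⟦X⟧) • (Matrix.diagonal d).map ((C (R := ℂ)))) *
          (star U).map ((C (R := ℂ))) := by
      rw [Matrix.mul_sub, Matrix.sub_mul, Matrix.mul_one, ← hmap1]
      congr 1
      rw [Matrix.mul_smul, Matrix.smul_mul, hspec, Matrix.map_mul, Matrix.map_mul]
    rw [e1, Matrix.det_mul, Matrix.det_mul, mul_comm, ← mul_assoc, ← Matrix.det_mul,
      ← Matrix.map_mul, hWU, Matrix.map_one _ (map_zero _) (map_one _), Matrix.det_one, one_mul]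
    have e2 : 1 - (X : ℂ⟦X⟧) • (Matrix.diagonal d).map ((C (R := ℂ)))
        = Matrix.diagonal (fun j => 1 - (C (R := ℂ)) (d j) * X) := by
      ext i j
      by_cases h : i = j
      · subst h; simp [Matrix.diagonal_apply_eq, Matrix.map_apply, mul_comm]
      · simp [Matrix.one_apply_ne h, Matrix.diagonal_apply_ne _ h, Matrix.map_apply]
    rw [e2, Matrix.det_diagonal]
  have htrpow : ∀ i : ℕ, Matrix.trace (S ^ i) = ∑ j, d j ^ i := by
    intro i
    rw [hpow i, Matrix.trace_mul_comm, ← Matrix.mul_assoc, hWU, Matrix.one_mul,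
      Matrix.diagonal_pow, Matrix.trace_diagonal]
    simp
  -- the resolvent
  have hGinv : (1 - (X : PowerSeries ℂ) • S.map ((C (R := ℂ))))⁻¹ = G S :=
    Matrix.inv_eq_right_inv (mul_G S)
  have hSM : S.map ((C (R := ℂ))) * (S⁻¹ * M).map ((C (R := ℂ))) = M.map ((C (R := ℂ))) := by
    rw [← Matrix.map_mul, ← Matrix.mul_assoc,
      Matrix.mul_nonsing_inv S ((Matrix.isUnit_iff_isUnit_det S).mp hS.isUnit), Matrix.one_mul]
  have htr : Matrix.trace
        ((1 - (X : PowerSeries ℂ) • S.map ((C (R := ℂ))))⁻¹ * S.map ((C (R := ℂ))) *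
          (S⁻¹ * M).map ((C (R := ℂ))) * ((X : PowerSeries ℂ) • 1))
      = PowerSeries.mk fun i => if i = 0 then 0 else Matrix.trace (M * S ^ (i - 1)) := by
    rw [hGinv, Matrix.mul_assoc (G S), hSM, trace_G_mul]
  -- the log-det series
  set L : PowerSeries ℂ :=
    PowerSeries.mk (fun i => if i = 0 then 0 else (i : ℂ)⁻¹ * Matrix.trace (S ^ i)) with hL
  have hLsum : L = ∑ j, ell (d j) := by
    ext i
    rw [hL, coeff_mk, map_sum]
    simp only [ell, coeff_mk]
    cases i with
    | zero => simp
    | succ m =>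
      rw [if_neg (Nat.succ_ne_zero m), htrpow, Finset.mul_sum]
      refine Finset.sum_congr rfl fun j _ => ?_
      rw [if_neg (Nat.succ_ne_zero m), mul_comm]
  have hL0 : constantCoeff L = 0 := by
    rw [← coeff_zero_eq_constantCoeff, hL, coeff_mk, if_pos rfl]
  have hdc : constantCoeff (Matrix.det (1 - (X : PowerSeries ℂ) • S.map ((C (R := ℂ))))) ≠ 0 := by
    rw [hdet, map_prod]
    have : ∀ j : Fin p, constantCoeff (1 - (C (R := ℂ)) (d j) * X) = 1 := by
      intro j; simp
    rw [Finset.prod_congr rfl fun j _ => this j, Finset.prod_const_one]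
    exact one_ne_zero
  have hdinv : (Matrix.det (1 - (X : PowerSeries ℂ) • S.map ((C (R := ℂ)))))⁻¹ = expComp L := by
    rw [PowerSeries.inv_eq_iff_mul_eq_one hdc, hLsum,
      expComp_sum _ _ (fun j _ => constantCoeff_ell (d j)), hdet, ← Finset.prod_mul_distrib]
    exact Finset.prod_eq_one fun j _ => expComp_ell_mul (d j)
  -- assemble
  set A : PowerSeries ℂ :=
    PowerSeries.mk (fun i => if i = 0 then 0 else Matrix.trace (M * S ^ (i - 1))) with hA
  have hA0 : constantCoeff (-A) = 0 := by
    rw [map_neg, ← coeff_zero_eq_constantCoeff, hA, coeff_mk, if_pos rfl, neg_zero]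
  have harg : -A + (n : ℂ) • L = PowerSeries.mk (fun i =>
      if i = 0 then 0
      else (n : ℂ) * (i : ℂ)⁻¹ * Matrix.trace (S ^ i) - Matrix.trace (M * S ^ (i - 1))) := by
    ext i
    rw [map_add, map_neg, coeff_smul, hA, hL, coeff_mk, coeff_mk, coeff_mk, smul_eq_mul]
    cases i with
    | zero => simp
    | succ m =>
      rw [if_neg (Nat.succ_ne_zero m), if_neg (Nat.succ_ne_zero m), if_neg (Nat.succ_ne_zero m)]
      ring
  rw [htr, hdinv, expComp_pow hL0 n, ← expComp_add hA0 (constantCoeff_smul _ hL0), harg]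
end
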